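/- Let b(x) = λx with λ > 0 and set ρ = λ·a. If ρ > 1, then there exists a unique β > 0 satisfying β·C(β) = 1; if ρ < 1, then β·C(β) > 1 for every β > 0, so no β > 0 satisfies β·C(β) = 1. -/

import Mathlib

open MeasureTheory Real Filter Set

/-- `C(β) = ∫₀¹ (1-x)⁻¹ exp(-∫₀ˣ b(aβy)/(1-y) dy) dx`. -/
noncomputable def Cfun (a : ℝ) (b : ℝ → ℝ) (β : ℝ) : ℝ :=
  ∫ x in (0:ℝ)..1, (1 - x)⁻¹ * Real.exp (-∫ y in (0:ℝ)..x, b (a * β * y) / (1 - y))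

/-! ### Auxiliary function `Jfun` and its properties -/

/-- `J(c) = ∫₀¹ exp (c - c t^(1/c)) dt`; one has `β C(β) = J(λaβ)/(λa)`. -/
noncomputable def Jfun (c : ℝ) : ℝ := ∫ t in (0:ℝ)..1, Real.exp (c - c * t ^ c⁻¹)

lemma rpow_inv_cont {c : ℝ} (hc : 0 < c) : Continuous fun t : ℝ => t ^ c⁻¹ := by
  rw [continuous_iff_continuousAt]
  exact fun t => Real.continuousAt_rpow_const t c⁻¹ (Or.inr (by positivity))

lemma g_cont {c : ℝ} (hc : 0 < c) : Continuous fun t : ℝ => Real.exp (c - c * t ^ c⁻¹) :=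
  (continuous_const.sub (continuous_const.mul (rpow_inv_cont hc))).rexp

lemma g_one_le {c : ℝ} (hc : 0 < c) {t : ℝ} (ht : t ∈ Icc (0:ℝ) 1) :
    1 ≤ Real.exp (c - c * t ^ c⁻¹) := by
  rw [show (1:ℝ) = Real.exp 0 by simp]
  apply Real.exp_le_exp.2
  have h1 : t ^ c⁻¹ ≤ 1 := Real.rpow_le_one ht.1 ht.2 (by positivity)
  nlinarith

lemma g_le_exp {c : ℝ} (hc : 0 < c) {t : ℝ} (ht : t ∈ Icc (0:ℝ) 1) :
    Real.exp (c - c * t ^ c⁻¹) ≤ Real.exp c := by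
  apply Real.exp_le_exp.2
  have h1 : 0 ≤ t ^ c⁻¹ := Real.rpow_nonneg ht.1 _
  nlinarith

lemma Jfun_ge_one {c : ℝ} (hc : 0 < c) : 1 ≤ Jfun c := by
  have := intervalIntegral.integral_mono_on (f := fun _ => (1:ℝ))
    (g := fun t => Real.exp (c - c * t ^ c⁻¹)) (by norm_num)
    (intervalIntegrable_const (μ := volume)) ((g_cont hc).intervalIntegrable 0 1)
    (fun t ht => g_one_le hc ht)
  simpa [Jfun] using this

lemma Jfun_le_exp {c : ℝ} (hc : 0 < c) : Jfun c ≤ Real.exp c := by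
  have := intervalIntegral.integral_mono_on (g := fun _ => Real.exp c)
    (f := fun t => Real.exp (c - c * t ^ c⁻¹)) (by norm_num)
    ((g_cont hc).intervalIntegrable 0 1) (intervalIntegrable_const (μ := volume))
    (fun t ht => g_le_exp hc ht)
  simpa [Jfun] using this

lemma phi_strictMono {t : ℝ} (ht : t ∈ Ioo (0:ℝ) 1) :
    StrictMonoOn (fun c : ℝ => c - c * t ^ c⁻¹) (Ioi 0) := by
  have hlt : Real.log t < 0 := Real.log_neg ht.1 ht.2
  have hψ : StrictMonoOn (fun c : ℝ => c - c * Real.exp (Real.log t / c)) (Ioi 0) := by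
    have hderiv : ∀ c ∈ interior (Ioi (0:ℝ)),
        HasDerivAt (fun c : ℝ => c - c * Real.exp (Real.log t / c))
          (1 - Real.exp (Real.log t / c) * (1 - Real.log t / c)) c := by
      intro c hc
      rw [interior_Ioi] at hc
      have hc0 : c ≠ 0 := ne_of_gt hc
      have hd : HasDerivAt (fun x : ℝ => Real.log t / x) (-(Real.log t / c ^ 2)) c := by
        have := (hasDerivAt_inv hc0).const_mul (Real.log t)
        simp only [div_eq_mul_inv]
        refine this.congr_deriv ?_
        ring
      have he : HasDerivAt (fun x : ℝ => Real.exp (Real.log t / x))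
          (Real.exp (Real.log t / c) * (-(Real.log t / c ^ 2))) c := hd.exp
      have h3 := (hasDerivAt_id c).sub ((hasDerivAt_id c).mul he)
      refine h3.congr_deriv ?_
      simp only [id_eq]
      field_simp
      ring
    apply strictMonoOn_of_hasDerivWithinAt_pos (convex_Ioi 0)
    · have : ContinuousOn (fun c : ℝ => Real.log t / c) (Ioi 0) :=
        continuousOn_const.div continuousOn_id (fun x hx => ne_of_gt hx)
      exact continuousOn_id.sub (continuousOn_id.mul (this.rexp))
    · exact fun c hc => (hderiv c hc).hasDerivWithinAt
    · intro c hc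
      rw [interior_Ioi] at hc
      have hu : Real.log t / c < 0 := div_neg_of_neg_of_pos hlt hc
      have key : Real.exp (Real.log t / c) * (1 - Real.log t / c) < 1 := by
        set u := Real.log t / c with hu'
        have h1 : 1 - u < Real.exp (-u) := by
          have := Real.add_one_lt_exp (x := -u) (by linarith)
          linarith
        have h2 : Real.exp u * (1 - u) < Real.exp u * Real.exp (-u) :=
          mul_lt_mul_of_pos_left h1 (Real.exp_pos u)
        rwa [← Real.exp_add, add_neg_cancel, Real.exp_zero] at h2
      linarith
  intro x hx y hy hxy
  have ex : x - x * t ^ x⁻¹ = x - x * Real.exp (Real.log t / x) := by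
    rw [Real.rpow_def_of_pos ht.1, div_eq_mul_inv]
  have ey : y - y * t ^ y⁻¹ = y - y * Real.exp (Real.log t / y) := by
    rw [Real.rpow_def_of_pos ht.1, div_eq_mul_inv]
  simpa only [ex, ey] using hψ hx hy hxy

lemma Jfun_strictMono : StrictMonoOn Jfun (Ioi (0:ℝ)) := by
  intro c hc c' hc' hlt
  apply intervalIntegral.integral_lt_integral_of_continuousOn_of_le_of_exists_lt one_pos
    ((g_cont hc).continuousOn) ((g_cont hc').continuousOn)
  · intro t htc
    rcases eq_or_lt_of_le htc.2 with h1 | h1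
    · simp [h1, Real.one_rpow]
    · exact Real.exp_le_exp.2 (phi_strictMono ⟨htc.1, h1⟩ hc hc' hlt).le
  · refine ⟨1/2, by norm_num, ?_⟩
    exact Real.exp_lt_exp.2 (phi_strictMono (by norm_num) hc hc' hlt)

lemma Jfun_contOn : ContinuousOn Jfun (Ioi (0:ℝ)) := by
  rw [continuousOn_iff_continuous_restrict]
  have : Continuous (Function.uncurry fun (c : Ioi (0:ℝ)) (t : ℝ) =>
      Real.exp ((c:ℝ) - (c:ℝ) * t ^ ((c:ℝ))⁻¹)) := by
    apply Real.continuous_exp.comp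
    apply Continuous.sub (continuous_subtype_val.comp continuous_fst)
    apply Continuous.mul (continuous_subtype_val.comp continuous_fst)
    rw [continuous_iff_continuousAt]
    rintro ⟨c, t⟩
    have hc : (0:ℝ) < c := c.2
    have h1 : ContinuousAt (fun p : ℝ × ℝ => p.1 ^ p.2) (t, (c:ℝ)⁻¹) :=
      Real.continuousAt_rpow (t, (c:ℝ)⁻¹) (Or.inr (by positivity))
    have h2 : ContinuousAt (fun p : Ioi (0:ℝ) × ℝ => (p.2, ((p.1:ℝ))⁻¹)) (c, t) := by
      apply ContinuousAt.prodMk continuous_snd.continuousAt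
      exact ((continuous_subtype_val.comp continuous_fst).continuousAt).inv₀ (ne_of_gt hc)
    have h3 := ContinuousAt.comp (x := ((⟨c, c.2⟩, t) : Ioi (0:ℝ) × ℝ)) h1 h2
    exact h3
  exact intervalIntegral.continuous_parametric_intervalIntegral_of_continuous' this 0 1

lemma exp_neg_le_quad {r : ℝ} (hr : 0 ≤ r) : Real.exp (-r) ≤ 1 - r + r ^ 2 := by
  have h1 : r + 1 ≤ Real.exp r := Real.add_one_le_exp r
  have h2 : Real.exp (-r) = (Real.exp r)⁻¹ := Real.exp_neg r
  have h3 : (Real.exp r)⁻¹ ≤ (1 + r)⁻¹ := by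
    apply inv_anti₀ (by positivity)
    linarith
  have h4 : (1 + r)⁻¹ ≤ 1 - r + r ^ 2 := by
    rw [inv_le_iff_one_le_mul₀ (by positivity)]
    nlinarith
  linarith

lemma Jfun_large {ρ : ℝ} (hρ : 0 < ρ) : ∃ c : ℝ, 0 < c ∧ ρ ≤ Jfun c := by
  set δ := Real.exp (-(2 * ρ)) with hδdef
  have hδ0 : 0 < δ := Real.exp_pos _
  have hδ1 : δ < 1 := Real.exp_lt_one_iff.2 (by linarith)
  have hlogδ : Real.log δ = -(2 * ρ) := Real.log_exp _
  have hlog2 : (0:ℝ) < Real.log 2 := Real.log_pos (by norm_num)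
  set c := (2 * ρ) ^ 2 / Real.log 2 with hcdef
  have hc : 0 < c := by positivity
  refine ⟨c, hc, ?_⟩
  have hpt : ∀ t ∈ Icc δ 1,
      Real.exp (-((2 * ρ) ^ 2 / c)) * t⁻¹ ≤ Real.exp (c - c * t ^ c⁻¹) := by
    intro t ht
    have ht0 : 0 < t := lt_of_lt_of_le hδ0 ht.1
    set s := -Real.log t with hsdef
    have hs0 : 0 ≤ s := by
      have := Real.log_nonpos ht0.le ht.2
      simp only [hsdef]; linarith
    have hsle : s ≤ 2 * ρ := by
      have := Real.log_le_log hδ0 ht.1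
      simp only [hsdef]; rw [hlogδ] at this; linarith
    have hrpow : t ^ c⁻¹ = Real.exp (-(s / c)) := by
      rw [Real.rpow_def_of_pos ht0]
      congr 1
      simp only [hsdef]
      field_simp
    have hexp : Real.exp (-(s / c)) ≤ 1 - s / c + (s / c) ^ 2 :=
      exp_neg_le_quad (by positivity)
    have hlow : s - s ^ 2 / c ≤ c - c * t ^ c⁻¹ := by
      rw [hrpow]
      have h2 : c * Real.exp (-(s / c)) ≤ c * (1 - s / c + (s / c) ^ 2) :=
        mul_le_mul_of_nonneg_left hexp hc.le
      have h3 : c * (1 - s / c + (s / c) ^ 2) = c - s + s ^ 2 / c := by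
        field_simp
      linarith
    have hexps : Real.exp s = t⁻¹ := by
      rw [hsdef, Real.exp_neg, Real.exp_log ht0]
    calc Real.exp (-((2 * ρ) ^ 2 / c)) * t⁻¹
        ≤ Real.exp (-(s ^ 2 / c)) * t⁻¹ := by
          apply mul_le_mul_of_nonneg_right _ (by positivity)
          apply Real.exp_le_exp.2
          have hsq : s ^ 2 ≤ (2 * ρ) ^ 2 := by nlinarith
          have : s ^ 2 / c ≤ (2 * ρ) ^ 2 / c := by gcongr
          linarith
      _ = Real.exp (s - s ^ 2 / c) := by
          rw [← hexps, ← Real.exp_add]; ring_nf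
      _ ≤ Real.exp (c - c * t ^ c⁻¹) := Real.exp_le_exp.2 hlow
  have hi1 : IntervalIntegrable (fun t : ℝ => Real.exp (-((2 * ρ) ^ 2 / c)) * t⁻¹)
      volume δ 1 := by
    apply ContinuousOn.intervalIntegrable
    apply ContinuousOn.mul continuousOn_const
    apply ContinuousOn.inv₀ continuousOn_id
    intro x hx
    rw [uIcc_of_le hδ1.le] at hx
    exact ne_of_gt (lt_of_lt_of_le hδ0 hx.1)
  have hi2 : IntervalIntegrable (fun t : ℝ => Real.exp (c - c * t ^ c⁻¹)) volume δ 1 :=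
    (g_cont hc).intervalIntegrable δ 1
  have hmono := intervalIntegral.integral_mono_on hδ1.le hi1 hi2 hpt
  have hval : (∫ t in δ..1, Real.exp (-((2 * ρ) ^ 2 / c)) * t⁻¹)
      = Real.exp (-((2 * ρ) ^ 2 / c)) * (2 * ρ) := by
    rw [intervalIntegral.integral_const_mul]
    congr 1
    rw [integral_inv (by
      rw [uIcc_of_le hδ1.le]
      exact fun h => absurd h.1 (not_le.2 hδ0))]
    rw [one_div, Real.log_inv, hlogδ]
    ring
  have hsplit := intervalIntegral.integral_add_adjacent_intervals
    ((g_cont hc).intervalIntegrable 0 δ) hi2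
  have hnn : 0 ≤ ∫ t in (0:ℝ)..δ, Real.exp (c - c * t ^ c⁻¹) :=
    intervalIntegral.integral_nonneg hδ0.le (fun u _ => (Real.exp_pos _).le)
  have hexpval : Real.exp (-((2 * ρ) ^ 2 / c)) = 2⁻¹ := by
    have h1 : (2 * ρ) ^ 2 / c = Real.log 2 := by
      rw [hcdef]
      field_simp
    rw [h1, Real.exp_neg, Real.exp_log two_pos]
  have : ρ ≤ ∫ t in δ..1, Real.exp (c - c * t ^ c⁻¹) := by
    rw [hval, hexpval] at hmono
    linarith
  rw [Jfun, ← hsplit]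
  linarith

/-! ### Representation of `β C(β)` in terms of `Jfun` -/

lemma inner_int {c x : ℝ} (hx : x ∈ Ico (0:ℝ) 1) :
    (∫ y in (0:ℝ)..x, c * y / (1 - y)) = c * (-Real.log (1 - x) - x) := by
  have key : ∀ y ∈ uIcc (0:ℝ) x,
      HasDerivAt (fun y => c * (-Real.log (1 - y) - y)) (c * y / (1 - y)) y := by
    intro y hy
    rw [uIcc_of_le hx.1] at hy
    have h1 : (0:ℝ) < 1 - y := by
      have : y < 1 := lt_of_le_of_lt hy.2 hx.2
      linarith
    have hd1 : HasDerivAt (fun y : ℝ => 1 - y) (-1) y := by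
      simpa using (hasDerivAt_id y).const_sub 1
    have hd2 : HasDerivAt (fun y : ℝ => Real.log (1 - y)) ((1 - y)⁻¹ * -1) y :=
      (Real.hasDerivAt_log (ne_of_gt h1)).comp y hd1
    have hd3 := ((hd2.neg).sub (hasDerivAt_id y)).const_mul c
    refine hd3.congr_deriv ?_
    have h1' : (1 - y) ≠ 0 := ne_of_gt h1
    rw [eq_div_iff h1']
    linear_combination c * inv_mul_cancel₀ h1'
  rw [intervalIntegral.integral_eq_sub_of_hasDerivAt key ?_]
  · simp
  · apply ContinuousOn.intervalIntegrable
    apply ContinuousOn.div (continuousOn_const.mul continuousOn_id)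
      (continuousOn_const.sub continuousOn_id)
    intro y hy
    rw [uIcc_of_le hx.1] at hy
    have : y < 1 := lt_of_le_of_lt hy.2 hx.2
    simp only [Pi.sub_apply, id_eq]
    intro h
    linarith [sub_eq_zero.1 h]

lemma rpow_integrable {c : ℝ} (hc : 0 < c) :
    IntervalIntegrable (fun x : ℝ => (1 - x) ^ (c - 1)) volume 0 1 := by
  have h1 : IntervalIntegrable (fun x : ℝ => x ^ (c - 1)) volume 0 1 :=
    intervalIntegral.intervalIntegrable_rpow' (by linarith)
  have h2 := h1.comp_sub_left 1
  simpa using h2.symm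

lemma ftc_rep {c : ℝ} (hc : 0 < c) :
    (∫ x in (0:ℝ)..1, Real.exp (c * x) * (1 - x) ^ (c - 1)) = Jfun c / c := by
  have hc0 : c ≠ 0 := ne_of_gt hc
  set g : ℝ → ℝ := fun t => Real.exp (c - c * t ^ c⁻¹) with hg
  have hgc : Continuous g := g_cont hc
  set P : ℝ → ℝ := fun u => ∫ t in (0:ℝ)..u, g t with hP
  have hPc : Continuous P :=
    intervalIntegral.continuous_primitive (fun a b => hgc.intervalIntegrable a b) 0
  set G : ℝ → ℝ := fun x => Jfun c - P ((1 - x) ^ c) with hG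
  have hφc : Continuous fun x : ℝ => (1 - x) ^ c := by
    have h0 : Continuous fun u : ℝ => u ^ c := by
      rw [continuous_iff_continuousAt]
      exact fun u => Real.continuousAt_rpow_const u c (Or.inr hc.le)
    exact h0.comp (continuous_const.sub continuous_id)
  have hGc : Continuous G := continuous_const.sub (hPc.comp hφc)
  have hG1 : G 1 = Jfun c := by
    simp [hG, hP, Real.zero_rpow hc0]
  have hG0 : G 0 = 0 := by
    simp only [hG, hP, sub_zero, Real.one_rpow]
    rw [sub_eq_zero]
    rfl
  have hderiv : ∀ x ∈ Ioo (0:ℝ) 1,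
      HasDerivAt G (c * (Real.exp (c * x) * (1 - x) ^ (c - 1))) x := by
    intro x hx
    have h1x : 0 < 1 - x := by linarith [hx.2]
    have hPd : HasDerivAt P (g ((1 - x) ^ c)) ((1 - x) ^ c) :=
      intervalIntegral.integral_hasDerivAt_right (hgc.intervalIntegrable _ _)
        (hgc.stronglyMeasurable.stronglyMeasurableAtFilter) hgc.continuousAt
    have hφd : HasDerivAt (fun x : ℝ => (1 - x) ^ c) (c * (1 - x) ^ (c - 1) * -1) x := by
      have hb : HasDerivAt (fun y : ℝ => 1 - y) (-1) x := by
        simpa using (hasDerivAt_id x).const_sub 1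
      exact (Real.hasDerivAt_rpow_const (x := 1 - x) (p := c)
        (Or.inl (ne_of_gt h1x))).comp x hb
    have hGd := (hPd.comp x hφd).const_sub (Jfun c)
    have hval : g ((1 - x) ^ c) = Real.exp (c * x) := by
      rw [hg]
      simp only
      rw [← Real.rpow_mul (le_of_lt h1x), mul_inv_cancel₀ hc0, Real.rpow_one]
      congr 1
      ring
    refine hGd.congr_deriv ?_
    rw [hval]
    ring
  have hint' : IntervalIntegrable (fun x : ℝ => (c * Real.exp (c * x)) * (1 - x) ^ (c - 1))
      volume 0 1 :=
    (rpow_integrable hc).continuousOn_mul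
      ((continuous_const.mul (Real.continuous_exp.comp
        (continuous_const.mul continuous_id))).continuousOn)
  have heq : (fun x : ℝ => c * (Real.exp (c * x) * (1 - x) ^ (c - 1)))
      = fun x : ℝ => (c * Real.exp (c * x)) * (1 - x) ^ (c - 1) := by
    funext x
    ring
  have hint : IntervalIntegrable (fun x : ℝ => c * (Real.exp (c * x) * (1 - x) ^ (c - 1)))
      volume 0 1 := by
    rw [heq]
    exact hint'
  have hFTC := intervalIntegral.integral_eq_sub_of_hasDerivAt_of_le zero_le_one
    hGc.continuousOn hderiv hint
  rw [hG1, hG0, sub_zero, intervalIntegral.integral_const_mul] at hFTC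
  rw [eq_div_iff hc0, mul_comm]
  exact hFTC

lemma Cfun_eq {a lam β : ℝ} (ha : 0 < a) (hlam : 0 < lam) (hβ : 0 < β) :
    Cfun a (fun x => lam * x) β
      = ∫ x in (0:ℝ)..1,
          Real.exp (lam * a * β * x) * (1 - x) ^ (lam * a * β - 1) := by
  set c := lam * a * β with hcdef
  have hc : 0 < c := by positivity
  rw [Cfun]
  apply intervalIntegral.integral_congr_ae
  have h1 : ∀ᵐ x : ℝ, x ≠ 1 := by
    rw [ae_iff]
    have : {x : ℝ | ¬x ≠ 1} = {1} := by ext z; simp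
    rw [this]
    exact Real.volume_singleton
  filter_upwards [h1] with x hx1 hxmem
  have hx : x ∈ Ioc (0:ℝ) 1 := by rwa [uIoc_of_le zero_le_one] at hxmem
  have hx2 : x < 1 := lt_of_le_of_ne hx.2 hx1
  have hxI : x ∈ Ico (0:ℝ) 1 := ⟨hx.1.le, hx2⟩
  have h1x : (0:ℝ) < 1 - x := by linarith
  have hin : (∫ y in (0:ℝ)..x, lam * (a * β * y) / (1 - y))
      = c * (-Real.log (1 - x) - x) := by
    rw [intervalIntegral.integral_congr (g := fun y => c * y / (1 - y))
      (fun y _ => by rw [show lam * (a * β * y) = c * y from by rw [hcdef]; ring])]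
    exact inner_int hxI
  rw [hin, show -(c * (-Real.log (1 - x) - x)) = c * x + Real.log (1 - x) * c from by ring,
    Real.exp_add, ← Real.rpow_def_of_pos h1x, Real.rpow_sub h1x, Real.rpow_one]
  field_simp

lemma rep {a lam β : ℝ} (ha : 0 < a) (hlam : 0 < lam) (hβ : 0 < β) :
    β * Cfun a (fun x => lam * x) β = Jfun (lam * a * β) / (lam * a) := by
  have hc : 0 < lam * a * β := by positivity
  rw [Cfun_eq ha hlam hβ, ftc_rep hc]
  field_simp

/-- for the linear firing function `b(x) = λ x` with `λ > 0` and
`ρ = λ a`: if `ρ > 1` there is a unique `β > 0` with `β C(β) = 1`; if `ρ < 1`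
then `β C(β) > 1` for every `β > 0`, so no solution exists. -/
theorem fixed_point_linear
    (a lam : ℝ) (ha : 0 < a) (hlam : 0 < lam) :
    (1 < lam * a → ∃! β : ℝ, 0 < β ∧ β * Cfun a (fun x => lam * x) β = 1) ∧
    (lam * a < 1 → ∀ β : ℝ, 0 < β → 1 < β * Cfun a (fun x => lam * x) β) := by
  have hρ0 : 0 < lam * a := by positivity
  constructor
  · intro hρ
    -- small endpoint
    set c₁ := Real.log (lam * a) / 2 with hc₁def
    have hlogρ : 0 < Real.log (lam * a) := Real.log_pos hρ
    have hc₁ : 0 < c₁ := by positivity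
    have hJ₁ : Jfun c₁ < lam * a := by
      have h1 : Jfun c₁ ≤ Real.exp c₁ := Jfun_le_exp hc₁
      have h2 : Real.exp c₁ < Real.exp (Real.log (lam * a)) := by
        apply Real.exp_lt_exp.2
        rw [hc₁def]
        linarith
      rw [Real.exp_log hρ0] at h2
      linarith
    obtain ⟨c₂', hc₂'pos, hc₂'⟩ := Jfun_large hρ0
    set c₂ := max c₁ c₂' with hc₂def
    have hc₂pos : 0 < c₂ := lt_of_lt_of_le hc₂'pos (le_max_right _ _)
    have hc₁₂ : c₁ ≤ c₂ := le_max_left _ _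
    have hJ₂ : lam * a ≤ Jfun c₂ :=
      le_trans hc₂' (Jfun_strictMono.monotoneOn (mem_Ioi.2 hc₂'pos) (mem_Ioi.2 hc₂pos)
        (le_max_right _ _))
    have hsub : Icc c₁ c₂ ⊆ Ioi (0:ℝ) := fun z hz => lt_of_lt_of_le hc₁ hz.1
    have hIVT := intermediate_value_Icc hc₁₂ (Jfun_contOn.mono hsub)
    have hmem : lam * a ∈ Icc (Jfun c₁) (Jfun c₂) := ⟨hJ₁.le, hJ₂⟩
    obtain ⟨c, hcmem, hJc⟩ := hIVT hmem
    have hcpos : 0 < c := lt_of_lt_of_le hc₁ hcmem.1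
    refine ⟨c / (lam * a), ⟨by positivity, ?_⟩, ?_⟩
    · have hβ : 0 < c / (lam * a) := by positivity
      rw [rep ha hlam hβ]
      rw [show lam * a * (c / (lam * a)) = c from by field_simp]
      rw [hJc]
      field_simp
    · rintro β' ⟨hβ'pos, hβ'eq⟩
      rw [rep ha hlam hβ'pos] at hβ'eq
      have h1 : Jfun (lam * a * β') = lam * a := by
        field_simp at hβ'eq
        linarith
      have h2 : lam * a * β' = c := by
        apply Jfun_strictMono.injOn (by simp only [mem_Ioi]; positivity) (mem_Ioi.2 hcpos)
        rw [h1, hJc]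
      field_simp
      linarith [h2]
  · intro hρ β hβ
    rw [rep ha hlam hβ]
    have hc : 0 < lam * a * β := by positivity
    rw [lt_div_iff₀ hρ0, one_mul]
    exact lt_of_lt_of_le hρ (Jfun_ge_one hc)
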